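/- If F is a self-dual 2-form (*F = i·F) and H is an anti-self-dual 2-form (*H = -i·H), then F·H = H·F, i.e. the commutator [F,H] vanishes. (Self-dual and anti-self-dual 2-forms commute under the metric product; an algebraic fact underlying the decomposition arguments of Section 5 of the paper.) -/
import Mathlib


open Matrix

noncomputable section

/-- The Minkowski metric `η = diag(-1,1,1,1)` as a 4×4 complex matrix. -/
def eta : Matrix (Fin 4) (Fin 4) ℂ := Matrix.diagonal ![-1, 1, 1, 1]

/-- The metric product `A·B := A η B`. -/
def mdot (A B : Matrix (Fin 4) (Fin 4) ℂ) : Matrix (Fin 4) (Fin 4) ℂ := A * eta * B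

/-- The commutator `[A,B] := A·B - B·A`. -/
def mcomm (A B : Matrix (Fin 4) (Fin 4) ℂ) : Matrix (Fin 4) (Fin 4) ℂ := mdot A B - mdot B A

/-- The anticommutator `{A,B} := A·B + B·A`. -/
def manti (A B : Matrix (Fin 4) (Fin 4) ℂ) : Matrix (Fin 4) (Fin 4) ℂ := mdot A B + mdot B A

/-- The scalar product `(A,B) := (1/2)·tr(A η Bᵀ η)`. -/
def mprod (A B : Matrix (Fin 4) (Fin 4) ℂ) : ℂ := (1/2) * (A * eta * Bᵀ * eta).trace

/-- Sign of an integer, valued in `ℂ`. -/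
def sgnZ (x : ℤ) : ℂ := if 0 < x then 1 else if x < 0 then -1 else 0

/-- The Levi-Civita symbol on `Fin 4`. -/
def eps (a b c d : Fin 4) : ℂ :=
  sgnZ ((b : ℤ) - a) * sgnZ ((c : ℤ) - a) * sgnZ ((d : ℤ) - a) *
  sgnZ ((c : ℤ) - b) * sgnZ ((d : ℤ) - b) * sgnZ ((d : ℤ) - c)

/-- The Hodge dual of a 2-form:
`(*F)_{αβ} := (1/2)·Σ ε(α,β,γ,δ)·η_{γμ}·η_{δν}·F_{μν}`. -/
def hodge (F : Matrix (Fin 4) (Fin 4) ℂ) : Matrix (Fin 4) (Fin 4) ℂ :=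
  Matrix.of fun α β => (1/2) * ∑ γ : Fin 4, ∑ δ : Fin 4, ∑ μ : Fin 4, ∑ ν : Fin 4,
    eps α β γ δ * eta γ μ * eta δ ν * F μ ν

/-- A 2-form is an antisymmetric matrix. -/
def IsTwoForm (F : Matrix (Fin 4) (Fin 4) ℂ) : Prop := Fᵀ = -F

/-- A self-dual 2-form: `*F = i·F`. -/
def SelfDual (F : Matrix (Fin 4) (Fin 4) ℂ) : Prop :=
  IsTwoForm F ∧ hodge F = Complex.I • F

/-- An anti-self-dual 2-form: `*F = -i·F`. -/
def AntiSelfDual (F : Matrix (Fin 4) (Fin 4) ℂ) : Prop :=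
  IsTwoForm F ∧ hodge F = (-Complex.I) • F

/-- A unitary SD bivector: a self-dual 2-form with `(𝒰,𝒰) = -1`. -/
def UnitarySD (U : Matrix (Fin 4) (Fin 4) ℂ) : Prop := SelfDual U ∧ mprod U U = -1

/-- A matrix with real entries. -/
def RealEntries (F : Matrix (Fin 4) (Fin 4) ℂ) : Prop := ∀ i j, (F i j).im = 0

/-- A real unitary simple 2-form: real, `(U,U) = -1`, `(U,*U) = 0`. -/
def RealUnitarySimple (U : Matrix (Fin 4) (Fin 4) ℂ) : Prop :=
  IsTwoForm U ∧ RealEntries U ∧ mprod U U = -1 ∧ mprod U (hodge U) = 0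

/-- The canonical SD bivector `𝒰 := (U - i·*U)/√2` of a real unitary simple 2-form. -/
def calU (U : Matrix (Fin 4) (Fin 4) ℂ) : Matrix (Fin 4) (Fin 4) ℂ :=
  ((Real.sqrt 2 : ℂ))⁻¹ • (U - Complex.I • hodge U)

/-- Entrywise complex conjugation. -/
def mconj (F : Matrix (Fin 4) (Fin 4) ℂ) : Matrix (Fin 4) (Fin 4) ℂ :=
  F.map (starRingEnd ℂ)

end

set_option maxRecDepth 4000 in
set_option maxHeartbeats 1600000 in
/-- a self-dual 2-form `F` and an anti-self-dual 2-form `H` commute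
under the metric product: `[F,H] = 0`. -/
theorem selfdual_antiselfdual_commute
    (F H : Matrix (Fin 4) (Fin 4) ℂ) (hF : SelfDual F) (hH : AntiSelfDual H) :
    mcomm F H = 0 := by
  obtain ⟨hFa, hFd⟩ := hF
  obtain ⟨hHa, hHd⟩ := hH
  have fA : ∀ i j, F j i = - F i j := fun i j => by
    have := congrFun (congrFun hFa i) j
    simpa [Matrix.transpose_apply] using this
  have hA : ∀ i j, H j i = - H i j := fun i j => by
    have := congrFun (congrFun hHa i) j
    simpa [Matrix.transpose_apply] using this
  have f1 : F 2 3 = Complex.I * F 0 1 := by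
    have := congrFun (congrFun hFd 0) 1
    simp [hodge, eps, sgnZ, eta, Fin.sum_univ_four, Matrix.diagonal] at this
    rw [fA 2 3] at this; linear_combination this
  have f2 : F 1 3 = -(Complex.I * F 0 2) := by
    have := congrFun (congrFun hFd 0) 2
    simp [hodge, eps, sgnZ, eta, Fin.sum_univ_four, Matrix.diagonal] at this
    rw [fA 1 3] at this; linear_combination -this
  have f3 : F 1 2 = Complex.I * F 0 3 := by
    have := congrFun (congrFun hFd 0) 3
    simp [hodge, eps, sgnZ, eta, Fin.sum_univ_four, Matrix.diagonal] at this
    rw [fA 1 2] at this; linear_combination this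
  have h1 : H 2 3 = -(Complex.I * H 0 1) := by
    have := congrFun (congrFun hHd 0) 1
    simp [hodge, eps, sgnZ, eta, Fin.sum_univ_four, Matrix.diagonal] at this
    rw [hA 2 3] at this; linear_combination this
  have h2 : H 1 3 = Complex.I * H 0 2 := by
    have := congrFun (congrFun hHd 0) 2
    simp [hodge, eps, sgnZ, eta, Fin.sum_univ_four, Matrix.diagonal] at this
    rw [hA 1 3] at this; linear_combination -this
  have h3 : H 1 2 = -(Complex.I * H 0 3) := by
    have := congrFun (congrFun hHd 0) 3
    simp [hodge, eps, sgnZ, eta, Fin.sum_univ_four, Matrix.diagonal] at this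
    rw [hA 1 2] at this; linear_combination this
  have hm : ∀ i j : Fin 4, mcomm F H i j =
      (- F i 0 * H 0 j + F i 1 * H 1 j + F i 2 * H 2 j + F i 3 * H 3 j)
        - (- H i 0 * F 0 j + H i 1 * F 1 j + H i 2 * F 2 j + H i 3 * F 3 j) := by
    intro i j
    simp [mcomm, mdot, Matrix.mul_apply, Fin.sum_univ_four, eta, Matrix.diagonal_apply]
  have fD : ∀ i : Fin 4, F i i = 0 := fun i => by linear_combination (1/2 : ℂ) * fA i i
  have hD : ∀ i : Fin 4, H i i = 0 := fun i => by linear_combination (1/2 : ℂ) * hA i i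
  ext i j
  rw [Matrix.zero_apply, hm]
  fin_cases i <;> fin_cases j <;>
    (simp only [Fin.reduceFinMk, Fin.mk_zero, Fin.mk_one]
     simp only [fD, hD, fA 0 1, fA 0 2, fA 0 3, fA 1 2, fA 1 3, fA 2 3,
        hA 0 1, hA 0 2, hA 0 3, hA 1 2, hA 1 3, hA 2 3,
        f1, f2, f3, h1, h2, h3]
     ring_nf
     try simp only [Complex.I_sq]
     try ring)
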